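/- If ∇_s q^{π,o}(s, π(s)) is L-Lipschitz in s and the gradient of the j-step state propagation through true dynamics is bounded by B in operator norm, then sup_s ‖∇_s q^π(s, π(s)) − ∇_s q^{π,o}(s, π(s))‖ ≤ (γ/(1−γ)) · L · B · E_ε[‖ε‖]. -/

import Mathlib

open MeasureTheory

/-- Bound on the gradient discrepancy between the true and the noisy value function:
if `∇_s q^{π,o}(s,π(s))` is `L`-Lipschitz, the `j`-step state-propagation Jacobians are
bounded by `B`, and the telescoping gradient decomposition holds, then
`sup_s ‖∇_s q^π(s,π(s)) − ∇_s q^{π,o}(s,π(s))‖ ≤ (γ/(1−γ)) L B E_ε[‖ε‖]`. -/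
theorem noisy_value_gradient_bound
    {S A : Type*} [NormedAddCommGroup S] [NormedSpace ℝ S] [MeasurableSpace S]
    (p : S → A → S) (π : S → A) (q qo : S → A → ℝ)
    (γ L B : ℝ) (hγ : γ ∈ Set.Ioo (0:ℝ) 1) (hL : 0 ≤ L) (hB : 0 ≤ B)
    (ν : Measure S) [IsProbabilityMeasure ν]   -- noise distribution
    (hεint : Integrable (fun ε : S => ‖ε‖) ν)
    -- ∇_s q^{π,o}(s,π(s)) is L-Lipschitz
    (hLip : ∀ x y : S,
      ‖fderiv ℝ (fun u : S => qo u (π u)) x - fderiv ℝ (fun u : S => qo u (π u)) y‖ ≤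
        L * ‖x - y‖)
    -- Jacobians of the j-step state propagation through the true dynamics are bounded
    (hprop : ∀ (j : ℕ) (s : S), 1 ≤ j →
      ‖fderiv ℝ ((fun u : S => p u (π u))^[j]) s‖ ≤ B)
    -- integrability of the noise-shifted value gradients
    (hgint : ∀ (j : ℕ) (s : S), Integrable (fun ε : S =>
      fderiv ℝ (fun u : S => qo u (π u)) ((fun u : S => p u (π u))^[j + 1] s + ε)) ν)
    -- the telescoping decomposition of the value-gradient difference (via the chain rule)
    (hdecomp : ∀ s : S, HasSum
      (fun j : ℕ => γ ^ (j + 1) •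
        ((fderiv ℝ (fun u : S => qo u (π u)) ((fun u : S => p u (π u))^[j + 1] s) -
            ∫ ε, fderiv ℝ (fun u : S => qo u (π u))
              ((fun u : S => p u (π u))^[j + 1] s + ε) ∂ν).comp
          (fderiv ℝ ((fun u : S => p u (π u))^[j + 1]) s)))
      (fderiv ℝ (fun u : S => q u (π u)) s - fderiv ℝ (fun u : S => qo u (π u)) s)) :
    ∀ s : S,
      ‖fderiv ℝ (fun u : S => q u (π u)) s - fderiv ℝ (fun u : S => qo u (π u)) s‖ ≤
        γ / (1 - γ) * L * B * ∫ ε, ‖ε‖ ∂ν := by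

  obtain ⟨hγ0, hγ1⟩ := hγ
  intro s
  set f : S → S := fun u => p u (π u) with hf
  set g : S → (S →L[ℝ] ℝ) := fun x => fderiv ℝ (fun u : S => qo u (π u)) x with hg
  set I : ℝ := ∫ ε, ‖ε‖ ∂ν with hIdef
  have hI : 0 ≤ I := integral_nonneg fun ε => norm_nonneg _
  have hterm : ∀ j : ℕ,
      ‖γ ^ (j + 1) • ((g (f^[j + 1] s) - ∫ ε, g (f^[j + 1] s + ε) ∂ν).comp
          (fderiv ℝ (f^[j + 1]) s))‖ ≤ γ ^ (j + 1) * (L * I * B) := by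
    intro j
    have hD : ‖g (f^[j + 1] s) - ∫ ε, g (f^[j + 1] s + ε) ∂ν‖ ≤ L * I := by
      have h1 : g (f^[j + 1] s) - ∫ ε, g (f^[j + 1] s + ε) ∂ν
          = ∫ ε, (g (f^[j + 1] s) - g (f^[j + 1] s + ε)) ∂ν := by
        rw [integral_sub (integrable_const _) (hgint j s), integral_const]
        simp
        rfl
      rw [h1]
      calc ‖∫ ε, (g (f^[j + 1] s) - g (f^[j + 1] s + ε)) ∂ν‖
          ≤ ∫ ε, ‖g (f^[j + 1] s) - g (f^[j + 1] s + ε)‖ ∂ν :=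
            norm_integral_le_integral_norm _
        _ ≤ ∫ ε, L * ‖ε‖ ∂ν := by
            apply integral_mono ((integrable_const _).sub (hgint j s)).norm
              (hεint.const_mul L)
            intro ε
            have h := hLip (f^[j + 1] s) (f^[j + 1] s + ε)
            simpa using h
        _ = L * I := integral_const_mul _ _
    rw [norm_smul _ ((g (f^[j + 1] s) - ∫ ε, g (f^[j + 1] s + ε) ∂ν).comp (fderiv ℝ (f^[j + 1]) s))]
    have hpow : ‖(γ : ℝ) ^ (j + 1)‖ = γ ^ (j + 1) := by
      rw [Real.norm_eq_abs, abs_pow, abs_of_pos hγ0]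
    rw [hpow]
    refine mul_le_mul_of_nonneg_left ?_ (pow_nonneg hγ0.le _)
    calc ‖(g (f^[j + 1] s) - ∫ ε, g (f^[j + 1] s + ε) ∂ν).comp (fderiv ℝ (f^[j + 1]) s)‖
        ≤ ‖g (f^[j + 1] s) - ∫ ε, g (f^[j + 1] s + ε) ∂ν‖ * ‖fderiv ℝ (f^[j + 1]) s‖ :=
          ContinuousLinearMap.opNorm_comp_le _ _
      _ ≤ (L * I) * B :=
          mul_le_mul hD (hprop (j + 1) s (Nat.le_add_left 1 j)) (norm_nonneg _)
            (by positivity)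
  have hgeo : HasSum (fun j : ℕ => γ ^ (j + 1) * (L * I * B))
      (γ / (1 - γ) * (L * I * B)) := by
    have h := (hasSum_geometric_of_lt_one hγ0.le hγ1).mul_left γ
    have h3 := h.mul_right (L * I * B)
    convert h3 using 2 with j
    · rfl
    · ring
    · ring
  have htsum := (hdecomp s).tsum_eq
  rw [← htsum]
  refine le_trans (tsum_of_norm_bounded hgeo hterm) ?_
  apply le_of_eq
  ring
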